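/- arXiv:1906.04710 — 2 statements merged into one kernel-verified Lean document; each statement's English description precedes it below -/
import Mathlib

section
/- At any point (0,y) with y>0, the acceleration of the Steiner drop satisfies f(0,y)=0 and ÿ = -2 sin α (1 - q₀/q(α)), where α ∈ (0,π/2) is the contact angle determined by y = √(tan α)/3 and q(α) = 2 sin²α √(tan α)/(4 + sec α). In particular, (0, √(tan α₀)/3) is an equilibrium of the system with parameter q₀ = q(α₀). -/
open Real

noncomputable def aSide (x y : ℝ) : ℝ := Real.sqrt ((1/(3*y) - 3*x)^2 + 9*y^2)

noncomputable def bSide (x y : ℝ) : ℝ := Real.sqrt ((3*x + 1/(3*y))^2 + 9*y^2)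

noncomputable def fF (q x y : ℝ) : ℝ :=
  (1 / aSide x y) * (1/(3*y) - 3*x) - (1 / bSide x y) * (1/(3*y) + 3*x)

noncomputable def hF (q x y : ℝ) : ℝ :=
  -3*y * (1 / aSide x y + 1 / bSide x y)
    + (q/(3*y)) * (2*(aSide x y + bSide x y)/(3*y) + aSide x y * bSide x y)

noncomputable def qFun (α : ℝ) : ℝ :=
  2 * Real.sin α ^ 2 * Real.sqrt (Real.tan α) / (4 + 1 / Real.cos α)

lemma fF_eval (q y : ℝ) : fF q 0 y = 0 := by
  simp [fF, aSide, bSide]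

lemma hF_eval (q α : ℝ) (hα : α ∈ Set.Ioo 0 (π/2)) :
    hF q 0 (Real.sqrt (Real.tan α) / 3) = -2 * Real.sin α * (1 - q / qFun α) := by
  obtain ⟨h0, h1⟩ := hα
  have hs : 0 < Real.sin α := Real.sin_pos_of_pos_of_lt_pi h0 (h1.trans (by linarith [Real.pi_pos]))
  have hc : 0 < Real.cos α := Real.cos_pos_of_mem_Ioo ⟨by linarith [Real.pi_pos], h1⟩
  have ht : 0 < Real.tan α := Real.tan_pos_of_pos_of_lt_pi_div_two h0 h1
  have hpy : Real.sin α ^ 2 + Real.cos α ^ 2 = 1 := Real.sin_sq_add_cos_sq α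
  set s := Real.sin α with hsdef
  set c := Real.cos α with hcdef
  have htan : Real.tan α = s / c := Real.tan_eq_sin_div_cos α
  set u := Real.sqrt (Real.tan α) with hudef
  have hu : 0 < u := Real.sqrt_pos.2 ht
  have hu2 : u ^ 2 = s / c := by rw [hudef, Real.sq_sqrt ht.le, htan]
  set v := Real.sqrt (s * c) with hvdef
  have hv : 0 < v := Real.sqrt_pos.2 (mul_pos hs hc)
  have hv2 : v ^ 2 = s * c := Real.sq_sqrt (mul_pos hs hc).le
  have huv : u * v = s := by
    rw [hudef, hvdef, ← Real.sqrt_mul ht.le]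
    have : Real.tan α * (s * c) = s ^ 2 := by rw [htan]; field_simp
    rw [this, Real.sqrt_sq hs.le]
  have hsec : (0:ℝ) < 4 + 1 / c := by positivity
  have harg : (1/(3*(u/3)) - 3*0)^2 + 9*(u/3)^2 = 1/(s*c) := by
    have h3 : 3 * (u/3) = u := by ring
    rw [h3]
    have hu2' : u^2 * c = s := by
      rw [hu2]; field_simp
    field_simp
    linear_combination 9*u^2*hpy + (9*u^2*s - 9*c)*hu2'
  have ha : aSide 0 (u/3) = 1 / v := by
    rw [aSide, harg, hvdef, one_div, one_div, ← Real.sqrt_inv]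
  have hb : bSide 0 (u/3) = 1 / v := by
    rw [bSide]
    rw [show (3*0 + 1/(3*(u/3)))^2 + 9*(u/3)^2 = (1/(3*(u/3)) - 3*0)^2 + 9*(u/3)^2 by ring,
      harg, hvdef, one_div, one_div, ← Real.sqrt_inv]
  have hqf : qFun α = 2 * s ^ 2 * u / (4 + 1 / c) := rfl
  rw [hF, ha, hb, hqf]
  have hu2' : u^2 * c = s := by
    rw [hu2]; field_simp
  have hucv : u * c = v := by
    have h2 : (u * c) * v = v * v := by
      rw [show (u*c)*v = (u*v)*c by ring, huv, ← hv2]; ring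
    exact mul_right_cancel₀ hv.ne' h2
  field_simp
  rw [← hucv, ← hu2']
  ring


lemma qFun_pos (α : ℝ) (hα : α ∈ Set.Ioo 0 (π/2)) : 0 < qFun α := by
  obtain ⟨h0, h1⟩ := hα
  have hs : 0 < Real.sin α := Real.sin_pos_of_pos_of_lt_pi h0 (h1.trans (by linarith [Real.pi_pos]))
  have hc : 0 < Real.cos α := Real.cos_pos_of_mem_Ioo ⟨by linarith [Real.pi_pos], h1⟩
  have ht : 0 < Real.tan α := Real.tan_pos_of_pos_of_lt_pi_div_two h0 h1
  have hu : 0 < Real.sqrt (Real.tan α) := Real.sqrt_pos.2 ht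
  have : 0 < 4 + 1 / Real.cos α := by positivity
  rw [qFun]
  positivity

theorem vertical_force_on_axis
    (q₀ α : ℝ) (hq₀ : 0 < q₀) (hα : α ∈ Set.Ioo 0 (π/2)) :
    fF q₀ 0 (Real.sqrt (Real.tan α) / 3) = 0 ∧
    hF q₀ 0 (Real.sqrt (Real.tan α) / 3)
      = -2 * Real.sin α * (1 - q₀ / qFun α) ∧
    (∀ α₀ ∈ Set.Ioo 0 (π/2), q₀ = qFun α₀ →
      hF q₀ 0 (Real.sqrt (Real.tan α₀) / 3) = 0) := by
  refine ⟨fF_eval q₀ _, hF_eval q₀ α hα, ?_⟩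
  intro α₀ hα₀ hq
  rw [hq, hF_eval (qFun α₀) α₀ hα₀, div_self (qFun_pos α₀ hα₀).ne']
  ring
end

section
/- At the equilibrium y₀ = √(tan α₀)/3 of the Steiner drop system with q = q(α₀), the partial derivative f_x(0,y₀) equals -6 √(sin⁵α₀ cos α₀), which is strictly negative for all α₀ ∈ (0, π/2). -/
open Real

lemma g_deriv (d : ℝ) (hd : 0 < d) (u : ℝ) :
    HasDerivAt (fun v : ℝ => v / Real.sqrt (v^2 + d))
      (d / ((u^2 + d) * Real.sqrt (u^2 + d))) u := by
  have hS : 0 < u^2 + d := by positivity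
  have hsqS : 0 < Real.sqrt (u^2 + d) := Real.sqrt_pos.mpr hS
  have h1 : HasDerivAt (fun v : ℝ => v^2 + d) (2*u) u := by
    simpa using ((hasDerivAt_pow 2 u).add_const d)
  have h2 : HasDerivAt (fun v : ℝ => Real.sqrt (v^2 + d))
      (u / Real.sqrt (u^2 + d)) u := by
    have := (Real.hasDerivAt_sqrt (ne_of_gt hS)).comp u h1
    refine this.congr_deriv (Eq.symm ?_)
    field_simp
  have h3 := (hasDerivAt_id u).div h2 (ne_of_gt hsqS)
  refine h3.congr_deriv (Eq.symm ?_)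
  have hms : Real.sqrt (u^2+d) * Real.sqrt (u^2+d) = u^2+d := Real.mul_self_sqrt hS.le
  simp only [id_eq]
  field_simp
  nlinarith [hms, sq_nonneg u]

lemma fx_deriv (α₀ : ℝ) (hα₀ : α₀ ∈ Set.Ioo 0 (π/2)) (q : ℝ) :
    HasDerivAt (fun x' => fF q x' (Real.sqrt (Real.tan α₀) / 3))
      (-6 * Real.sqrt (Real.sin α₀ ^ 5 * Real.cos α₀)) 0 := by
  obtain ⟨h0, h1⟩ := hα₀
  have hsin : 0 < Real.sin α₀ := Real.sin_pos_of_pos_of_lt_pi h0 (by linarith [Real.pi_pos])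
  have hcos : 0 < Real.cos α₀ := Real.cos_pos_of_mem_Ioo ⟨by linarith [Real.pi_pos], h1⟩
  have ht : 0 < Real.tan α₀ := Real.tan_pos_of_pos_of_lt_pi_div_two h0 h1
  set t := Real.tan α₀ with htdef
  set s := Real.sqrt t with hsdef
  have hs : 0 < s := Real.sqrt_pos.mpr ht
  have hs2 : s^2 = t := Real.sq_sqrt ht.le
  set y : ℝ := s / 3 with hy
  have hyp : 0 < y := by positivity
  have h9y : 9 * y^2 = t := by rw [hy]; field_simp; linarith [hs2]
  have hc : 1/(3*y) = 1/s := by rw [hy]; ring_nf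
  set c : ℝ := 1/s with hcdef
  -- rewrite the function
  have hfun : (fun x' => fF q x' y) =
      (fun x' => (c - 3*x') / Real.sqrt ((c - 3*x')^2 + t)
        - (c + 3*x') / Real.sqrt ((c + 3*x')^2 + t)) := by
    funext x
    simp only [fF, aSide, bSide, hc, h9y]
    rw [one_div_mul_eq_div, one_div_mul_eq_div]
    ring_nf
  rw [hfun]
  -- derivatives
  have hga := g_deriv t ht c
  have hl1 : HasDerivAt (fun x' : ℝ => c - 3*x') (-3) 0 := by
    simpa using ((hasDerivAt_id (0:ℝ)).const_mul 3).const_sub c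
  have hl2 : HasDerivAt (fun x' : ℝ => c + 3*x') 3 0 := by
    simpa using ((hasDerivAt_id (0:ℝ)).const_mul 3).const_add c
  have hga1 : HasDerivAt (fun v : ℝ => v / Real.sqrt (v^2 + t))
      (t / ((c^2 + t) * Real.sqrt (c^2 + t))) ((fun x' : ℝ => c - 3*x') 0) := by
    simpa using hga
  have hga2 : HasDerivAt (fun v : ℝ => v / Real.sqrt (v^2 + t))
      (t / ((c^2 + t) * Real.sqrt (c^2 + t))) ((fun x' : ℝ => c + 3*x') 0) := by
    simpa using hga
  have hc1 : HasDerivAt (fun x' : ℝ => (c - 3*x') / Real.sqrt ((c - 3*x')^2 + t))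
      (t / ((c^2 + t) * Real.sqrt (c^2 + t)) * (-3)) 0 := by have := hga1.comp 0 hl1; exact this
  have hc2 : HasDerivAt (fun x' : ℝ => (c + 3*x') / Real.sqrt ((c + 3*x')^2 + t))
      (t / ((c^2 + t) * Real.sqrt (c^2 + t)) * 3) 0 := by have := hga2.comp 0 hl2; exact this
  have hD := hc1.sub hc2
  refine hD.congr_deriv (Eq.symm ?_)
  -- value computation
  have hS : c^2 + t = 1 / (Real.sin α₀ * Real.cos α₀) := by
    have hc2 : c^2 = 1/t := by rw [hcdef]; rw [div_pow, one_pow, hs2]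
    rw [hc2, htdef, Real.tan_eq_sin_div_cos]
    field_simp
    nlinarith [Real.sin_sq_add_cos_sq α₀]
  have hsc : 0 < Real.sin α₀ * Real.cos α₀ := by positivity
  have hsqrtS : Real.sqrt (c^2 + t) = 1 / Real.sqrt (Real.sin α₀ * Real.cos α₀) := by
    rw [hS, one_div, Real.sqrt_inv, one_div]
  have hsqsc : 0 < Real.sqrt (Real.sin α₀ * Real.cos α₀) := Real.sqrt_pos.mpr hsc
  have hms : Real.sqrt (Real.sin α₀ * Real.cos α₀) * Real.sqrt (Real.sin α₀ * Real.cos α₀)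
      = Real.sin α₀ * Real.cos α₀ := Real.mul_self_sqrt hsc.le
  have key : Real.sqrt (Real.sin α₀ ^ 5 * Real.cos α₀)
      = t * (Real.sin α₀ * Real.cos α₀) * Real.sqrt (Real.sin α₀ * Real.cos α₀) := by
    have h4 : Real.sqrt (Real.sin α₀^4) = Real.sin α₀^2 := by
      rw [show Real.sin α₀^4 = (Real.sin α₀^2)^2 by ring, Real.sqrt_sq (by positivity)]
    rw [show Real.sin α₀^5 * Real.cos α₀ = Real.sin α₀^4 * (Real.sin α₀ * Real.cos α₀) by ring,
      Real.sqrt_mul (by positivity), h4, htdef, Real.tan_eq_sin_div_cos]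
    field_simp
  rw [key, hS, one_div (Real.sin α₀ * Real.cos α₀), Real.sqrt_inv, ← mul_inv_rev,
    div_eq_mul_inv, inv_inv]
  ring

theorem fx_at_equilibrium (α₀ : ℝ) (hα₀ : α₀ ∈ Set.Ioo 0 (π/2)) :
    HasDerivAt (fun x' => fF (qFun α₀) x' (Real.sqrt (Real.tan α₀) / 3))
      (-6 * Real.sqrt (Real.sin α₀ ^ 5 * Real.cos α₀)) 0 ∧
    -6 * Real.sqrt (Real.sin α₀ ^ 5 * Real.cos α₀) < 0 := by
  obtain ⟨h0, h1⟩ := hα₀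
  have hsin : 0 < Real.sin α₀ := Real.sin_pos_of_pos_of_lt_pi h0 (by linarith [Real.pi_pos])
  have hcos : 0 < Real.cos α₀ := Real.cos_pos_of_mem_Ioo ⟨by linarith [Real.pi_pos], h1⟩
  refine ⟨fx_deriv α₀ ⟨h0, h1⟩ _, ?_⟩
  have : 0 < Real.sqrt (Real.sin α₀ ^ 5 * Real.cos α₀) := Real.sqrt_pos.mpr (by positivity)
  linarith
end
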